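/- For complex numbers (t2, t4), the surface in ℂ³ defined by F(x,y,z) = z⁴ + t2·z² + t4 + t2²/8 − x·y = 0 has a singular point (a point of the surface at which all three partial derivatives of F vanish) if and only if (t2² + 8·t4)·(t2² − 8·t4) = 0. (This computes the discriminant of the semiuniversal deformation of the simple singularity of type B₂.) -/
import Mathlib

private lemma deriv_simp (t2 t4 x y z : ℂ) :
    deriv (fun x' : ℂ => z ^ 4 + t2 * z ^ 2 + t4 + t2 ^ 2 / 8 - x' * y) x = -y ∧
    deriv (fun y' : ℂ => z ^ 4 + t2 * z ^ 2 + t4 + t2 ^ 2 / 8 - x * y') y = -x ∧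
    deriv (fun z' : ℂ => z' ^ 4 + t2 * z' ^ 2 + t4 + t2 ^ 2 / 8 - x * y) z
      = 4 * z ^ 3 + 2 * t2 * z := by
  refine ⟨?_, ?_, ?_⟩
  · exact (((hasDerivAt_id x).mul_const y).const_sub
      (z ^ 4 + t2 * z ^ 2 + t4 + t2 ^ 2 / 8)).deriv.trans (by simp)
  · exact (((hasDerivAt_id y).const_mul x).const_sub
      (z ^ 4 + t2 * z ^ 2 + t4 + t2 ^ 2 / 8)).deriv.trans (by simp)
  · have : (fun z' : ℂ => z' ^ 4 + t2 * z' ^ 2 + t4 + t2 ^ 2 / 8 - x * y)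
        = fun z' : ℂ => z' ^ 4 + t2 * z' ^ 2 + (t4 + t2 ^ 2 / 8 - x * y) := by
      funext z'; ring
    rw [this]
    have hd : HasDerivAt (fun z' : ℂ => z' ^ 4 + t2 * z' ^ 2 + (t4 + t2 ^ 2 / 8 - x * y))
        (4 * z ^ 3 + 2 * t2 * z) z := by
      have h1 : HasDerivAt (fun z' : ℂ => z' ^ 4) (4 * z ^ 3) z := by
        simpa using (hasDerivAt_pow 4 z)
      have h2 : HasDerivAt (fun z' : ℂ => t2 * z' ^ 2) (t2 * (2 * z)) z := by
        simpa using ((hasDerivAt_pow 2 z).const_mul t2)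
      simpa [mul_comm, mul_assoc, mul_left_comm] using
        ((h1.add h2).add_const (t4 + t2 ^ 2 / 8 - x * y))
    exact hd.deriv

/-- Discriminant of the semiuniversal deformation of the simple singularity of type B₂. -/
theorem stmt_10 (t2 t4 : ℂ) :
    (∃ x y z : ℂ,
      z ^ 4 + t2 * z ^ 2 + t4 + t2 ^ 2 / 8 - x * y = 0 ∧
      deriv (fun x' : ℂ => z ^ 4 + t2 * z ^ 2 + t4 + t2 ^ 2 / 8 - x' * y) x = 0 ∧
      deriv (fun y' : ℂ => z ^ 4 + t2 * z ^ 2 + t4 + t2 ^ 2 / 8 - x * y') y = 0 ∧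
      deriv (fun z' : ℂ => z' ^ 4 + t2 * z' ^ 2 + t4 + t2 ^ 2 / 8 - x * y) z = 0) ↔
    (t2 ^ 2 + 8 * t4) * (t2 ^ 2 - 8 * t4) = 0 := by
  constructor
  · rintro ⟨x, y, z, hF, hx, hy, hz⟩
    obtain ⟨d1, d2, d3⟩ := deriv_simp t2 t4 x y z
    rw [d1] at hx; rw [d2] at hy; rw [d3] at hz
    have hy0 : y = 0 := by linear_combination -hx
    have hx0 : x = 0 := by linear_combination -hy
    subst hx0; subst hy0
    -- hz : 4z³ + 2t2 z = 0, hF : z⁴ + t2 z² + t4 + t2²/8 = 0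
    have hz' : 2 * z * (2 * z ^ 2 + t2) = 0 := by linear_combination hz
    rcases mul_eq_zero.1 hz' with h | h
    · have hz0 : z = 0 := by
        rcases mul_eq_zero.1 h with h2 | h2
        · exact absurd h2 (by norm_num)
        · exact h2
      subst hz0
      have : t2 ^ 2 + 8 * t4 = 0 := by linear_combination 8 * hF
      rw [this, zero_mul]
    · have : t2 ^ 2 - 8 * t4 = 0 := by
        linear_combination -8 * hF + (4 * z ^ 2 + 2 * t2) * h
      rw [this, mul_zero]
  · intro hdisc
    rcases mul_eq_zero.1 hdisc with h | h
    · refine ⟨0, 0, 0, ?_, ?_, ?_, ?_⟩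
      · linear_combination h / 8
      · obtain ⟨d1, d2, d3⟩ := deriv_simp t2 t4 0 0 0
        rw [d1]; exact neg_zero
      · obtain ⟨d1, d2, d3⟩ := deriv_simp t2 t4 0 0 0
        rw [d2]; exact neg_zero
      · obtain ⟨d1, d2, d3⟩ := deriv_simp t2 t4 0 0 0
        rw [d3]; ring
    · obtain ⟨z, hz⟩ : ∃ z : ℂ, z ^ 2 = -t2 / 2 := IsAlgClosed.exists_pow_nat_eq (-t2 / 2) (by norm_num : (0:ℕ) < 2)
      refine ⟨0, 0, z, ?_, ?_, ?_, ?_⟩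
      · have : z ^ 4 = t2 ^ 2 / 4 := by
          have : z ^ 4 = (z ^ 2) ^ 2 := by ring
          rw [this, hz]; ring
        rw [this, hz]
        linear_combination -h / 8
      · obtain ⟨d1, d2, d3⟩ := deriv_simp t2 t4 0 0 z
        rw [d1]; exact neg_zero
      · obtain ⟨d1, d2, d3⟩ := deriv_simp t2 t4 0 0 z
        rw [d2]; exact neg_zero
      · obtain ⟨d1, d2, d3⟩ := deriv_simp t2 t4 0 0 z
        rw [d3]
        linear_combination (4 * z) * hz
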